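/- Fix a prime power q, erasure probability ε∈(0,1), batch size M ≥ 1 and inner block-length N ≥ 1. Let P be the (M+1)×(M+1) matrix with (i,j) entry p_{i,j} = Σ_{k=j}^{N} C(N,k)(1−ε)^k ε^{N−k} ζ_j^{i,k} for i ≥ j and p_{i,j} = 0 for i < j, where ζ_j^{i,k} = ζ_j^i ζ_j^k / (ζ_j^j q^{(i−j)(k−j)}) and ζ_r^m = ∏_{t=0}^{r−1}(1 − q^{−m+t}) (with ζ_0^m = 1). Let π_0 = (0,0,…,0,1) and π_L = π_0 P^L. Then the expected rank E[π_L] = Σ_{j=0}^{M} j·(π_L)_j satisfies E[π_L] = Θ( (1 − (ε + (1−ε)/q)^N)^L ) as L→∞. -/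

import Mathlib

open scoped BigOperators

/-- `ζ_r^m = ∏_{t=0}^{r-1} (1 - q^{-m+t})`, the probability-related quantity for ranks of
uniformly random matrices over `F_q` (`ζ_0^m = 1`). -/
noncomputable def zeta (q r m : ℕ) : ℝ :=
  ∏ t ∈ Finset.range r, (1 - (q : ℝ) ^ (-(m : ℤ) + (t : ℤ)))

/-- The `(M+1)×(M+1)` rank-transition matrix `P` of random linear recoding over a packet
erasure channel with erasure probability `ε`, inner block-length `N` and field size `q`:
`p_{i,j} = Σ_{k=j}^{N} C(N,k)(1-ε)^k ε^{N-k} ζ_j^{i,k}` for `i ≥ j` and `0` otherwise,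
where `ζ_j^{i,k} = ζ_j^i ζ_j^k / (ζ_j^j q^{(i-j)(k-j)})`. -/
noncomputable def batsP (q : ℕ) (ε : ℝ) (N M : ℕ) :
    Matrix (Fin (M + 1)) (Fin (M + 1)) ℝ :=
  Matrix.of fun i j =>
    if (j : ℕ) ≤ (i : ℕ) then
      ∑ k ∈ Finset.Icc (j : ℕ) N,
        (N.choose k : ℝ) * (1 - ε) ^ k * ε ^ (N - k) *
          (zeta q j i * zeta q j k /
            (zeta q j j * (q : ℝ) ^ (((i : ℕ) - (j : ℕ)) * (k - (j : ℕ)))))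
    else 0

/-- Expected rank `E[π_L] = Σ_j j (π_L)_j` where `π_L = π_0 P^L` and
`π_0 = (0, …, 0, 1)`. -/
noncomputable def batsE (q : ℕ) (ε : ℝ) (N M L : ℕ) : ℝ :=
  ∑ j : Fin (M + 1),
    (j : ℝ) *
      Matrix.vecMul (fun j' : Fin (M + 1) => if (j' : ℕ) = M then 1 else 0)
        ((batsP q ε N M) ^ L) j

/-- For a prime power `q`, erasure probability `ε ∈ (0,1)`, batch size
`M ≥ 1` and inner block-length `N ≥ 1`, the expected rank `E[π_L]` of a batch at node
`L` under random linear recoding satisfies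
`E[π_L] = Θ((1 - (ε + (1-ε)/q)^N)^L)` as `L → ∞`. -/
lemma zeta_factor_lt_one {q : ℕ} (hq : 2 ≤ q) {t m : ℕ} (ht : t < m) :
    (q : ℝ) ^ (-(m : ℤ) + (t : ℤ)) < 1 := by
  have hq1 : (1:ℝ) ≤ (q:ℝ) := by exact_mod_cast Nat.one_le_of_lt hq
  have h1 : (-(m : ℤ) + (t : ℤ)) ≤ -1 := by omega
  calc (q : ℝ) ^ (-(m : ℤ) + (t : ℤ)) ≤ (q:ℝ) ^ (-1 : ℤ) := zpow_le_zpow_right₀ hq1 h1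
    _ = ((q:ℝ))⁻¹ := by simp
    _ < 1 := by
        rw [inv_lt_one_iff₀]; right; exact_mod_cast Nat.lt_of_lt_of_le Nat.one_lt_two hq

lemma zeta_pos {q : ℕ} (hq : 2 ≤ q) {r m : ℕ} (h : r ≤ m) : 0 < zeta q r m := by
  refine Finset.prod_pos fun t ht => ?_
  have := zeta_factor_lt_one hq (show t < m by
    have := Finset.mem_range.mp ht; omega)
  linarith

lemma zeta_le_one {q : ℕ} (hq : 2 ≤ q) {r m : ℕ} (h : r ≤ m) : zeta q r m ≤ 1 := by
  refine Finset.prod_le_one (fun t ht => ?_) (fun t ht => ?_)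
  · have := zeta_factor_lt_one hq (show t < m by
      have := Finset.mem_range.mp ht; omega)
    linarith
  · have : (0:ℝ) < (q : ℝ) ^ (-(m : ℤ) + (t : ℤ)) := by
      refine zpow_pos ?_ _
      have : (0:ℕ) < q := by omega
      exact_mod_cast this
    linarith

lemma zeta_one (q k : ℕ) : zeta q 1 k = 1 - (q:ℝ) ^ (-(k:ℤ)) := by
  simp [zeta]

lemma zeta_zero_eq (q : ℕ) : zeta q 1 0 = 0 := by
  simp [zeta]

lemma zeta_le_zeta_one {q : ℕ} (hq : 2 ≤ q) {i k : ℕ} (hi : 1 ≤ i) (hik : i ≤ k) :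
    zeta q i k ≤ zeta q 1 k := by
  obtain ⟨n, rfl⟩ := Nat.exists_eq_add_of_le hi
  rw [show 1 + n = n + 1 by ring]
  rw [zeta, Finset.prod_range_succ', zeta_one]
  have hf0 : (1 - (q : ℝ) ^ (-(k : ℤ) + ((0:ℕ) : ℤ))) = 1 - (q:ℝ) ^ (-(k:ℤ)) := by norm_num
  rw [hf0]
  have h0pos : 0 ≤ 1 - (q:ℝ) ^ (-(k:ℤ)) := by
    have := zeta_factor_lt_one hq (show 0 < k by omega)
    simpa using this.le
  have hprod : ∏ t ∈ Finset.range n, (1 - (q : ℝ) ^ (-(k : ℤ) + ((t+1:ℕ) : ℤ))) ≤ 1 := by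
    refine Finset.prod_le_one (fun t ht => ?_) (fun t ht => ?_)
    · have : t + 1 < k := by have := Finset.mem_range.mp ht; omega
      have := zeta_factor_lt_one hq this
      push_cast at this ⊢
      linarith
    · have : (0:ℝ) < (q : ℝ) ^ (-(k : ℤ) + ((t+1:ℕ) : ℤ)) := by
        refine zpow_pos ?_ _
        have : (0:ℕ) < q := by omega
        exact_mod_cast this
      linarith
  calc (∏ t ∈ Finset.range n, (1 - (q : ℝ) ^ (-(k : ℤ) + ((t+1:ℕ) : ℤ)))) *
        (1 - (q:ℝ) ^ (-(k:ℤ)))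
      ≤ 1 * (1 - (q:ℝ) ^ (-(k:ℤ))) := by
        apply mul_le_mul_of_nonneg_right hprod h0pos
    _ = 1 - (q:ℝ) ^ (-(k:ℤ)) := one_mul _

lemma qpow_pos {q : ℕ} (hq : 2 ≤ q) (e : ℕ) : (0:ℝ) < (q:ℝ) ^ e := by
  have h : (0:ℕ) < q := by omega
  have h' : (0:ℝ) < (q:ℝ) := by exact_mod_cast h
  positivity

lemma batsP_nonneg {q : ℕ} (hq : 2 ≤ q) {ε : ℝ} (hε : 0 < ε) (hε1 : ε < 1) (N M : ℕ)
    (i j : Fin (M+1)) : 0 ≤ batsP q ε N M i j := by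
  rw [batsP]
  simp only [Matrix.of_apply]
  split
  · rename_i hji
    refine Finset.sum_nonneg fun k hk => ?_
    have hjk : (j:ℕ) ≤ k := (Finset.mem_Icc.mp hk).1
    have h1 := zeta_pos hq hji
    have h2 := zeta_pos hq hjk
    have h3 := zeta_pos hq (le_refl (j:ℕ))
    have h4 := qpow_pos hq (((i : ℕ) - (j : ℕ)) * (k - (j : ℕ)))
    have hc : (0:ℝ) ≤ (N.choose k : ℝ) := by positivity
    have h1ε : (0:ℝ) ≤ 1 - ε := by linarith
    have hε' : (0:ℝ) ≤ (1 - ε) ^ k := by positivity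
    have hε'' : (0:ℝ) ≤ ε ^ (N - k) := by positivity
    have hfr : (0:ℝ) ≤ zeta q (j:ℕ) (i:ℕ) * zeta q (j:ℕ) k /
        (zeta q (j:ℕ) (j:ℕ) * (q : ℝ) ^ (((i : ℕ) - (j : ℕ)) * (k - (j : ℕ)))) := by
      apply div_nonneg (mul_nonneg h1.le h2.le) (mul_nonneg h3.le h4.le)
    have := mul_nonneg (mul_nonneg (mul_nonneg hc hε') hε'') hfr
    exact this
  · exact le_refl 0

lemma binom_sum_le_one {ε : ℝ} (hε : 0 < ε) (hε1 : ε < 1) (N j : ℕ) :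
    ∑ k ∈ Finset.Icc j N, (N.choose k : ℝ) * (1 - ε) ^ k * ε ^ (N - k) ≤ 1 := by
  have hsub : Finset.Icc j N ⊆ Finset.range (N+1) := by
    intro k hk
    simp only [Finset.mem_Icc] at hk
    simp only [Finset.mem_range]; omega
  have h1ε : (0:ℝ) ≤ 1 - ε := by linarith
  calc ∑ k ∈ Finset.Icc j N, (N.choose k : ℝ) * (1 - ε) ^ k * ε ^ (N - k)
      ≤ ∑ k ∈ Finset.range (N+1), (N.choose k : ℝ) * (1 - ε) ^ k * ε ^ (N - k) := by
        refine Finset.sum_le_sum_of_subset_of_nonneg hsub fun k _ _ => by positivity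
    _ = ((1 - ε) + ε) ^ N := by
        rw [add_pow]
        refine Finset.sum_congr rfl fun k _ => by ring
    _ = 1 := by norm_num

lemma batsP_le {q : ℕ} (hq : 2 ≤ q) {ε : ℝ} (hε : 0 < ε) (hε1 : ε < 1) (N M : ℕ)
    (i j : Fin (M+1)) : batsP q ε N M i j ≤ (zeta q (j:ℕ) (j:ℕ))⁻¹ := by
  have hzjj := zeta_pos hq (le_refl (j:ℕ))
  rw [batsP]
  simp only [Matrix.of_apply]
  split
  · rename_i hji
    calc ∑ k ∈ Finset.Icc (j:ℕ) N,
          (N.choose k : ℝ) * (1 - ε) ^ k * ε ^ (N - k) *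
            (zeta q j i * zeta q j k /
              (zeta q j j * (q : ℝ) ^ (((i : ℕ) - (j : ℕ)) * (k - (j : ℕ)))))
        ≤ ∑ k ∈ Finset.Icc (j:ℕ) N,
          (N.choose k : ℝ) * (1 - ε) ^ k * ε ^ (N - k) * (zeta q (j:ℕ) (j:ℕ))⁻¹ := by
          refine Finset.sum_le_sum fun k hk => ?_
          have hjk : (j:ℕ) ≤ k := (Finset.mem_Icc.mp hk).1
          have h1 := zeta_pos hq hji
          have h2 := zeta_pos hq hjk
          have h1' := zeta_le_one hq hji
          have h2' := zeta_le_one hq hjk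
          have h4 := qpow_pos hq (((i : ℕ) - (j : ℕ)) * (k - (j : ℕ)))
          have h4' : (1:ℝ) ≤ (q:ℝ) ^ (((i : ℕ) - (j : ℕ)) * (k - (j : ℕ))) := by
            apply one_le_pow₀
            have : (1:ℕ) ≤ q := by omega
            exact_mod_cast this
          have h1ε : (0:ℝ) ≤ 1 - ε := by linarith
          have hcoef : (0:ℝ) ≤ (N.choose k : ℝ) * (1 - ε) ^ k * ε ^ (N - k) := by positivity
          refine mul_le_mul_of_nonneg_left ?_ hcoef
          rw [show (zeta q (j:ℕ) (j:ℕ))⁻¹ = 1 / zeta q (j:ℕ) (j:ℕ) from (one_div _).symm]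
          refine div_le_div₀ zero_le_one ?_ hzjj ?_
          · exact mul_le_one₀ h1' h2.le h2'
          · nlinarith
      _ = (∑ k ∈ Finset.Icc (j:ℕ) N,
          (N.choose k : ℝ) * (1 - ε) ^ k * ε ^ (N - k)) * (zeta q (j:ℕ) (j:ℕ))⁻¹ := by
          rw [Finset.sum_mul]
      _ ≤ 1 * (zeta q (j:ℕ) (j:ℕ))⁻¹ := by
          refine mul_le_mul_of_nonneg_right (binom_sum_le_one hε hε1 N _) (by positivity)
      _ = (zeta q (j:ℕ) (j:ℕ))⁻¹ := one_mul _
  · positivity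

lemma batsP_diag {q : ℕ} (hq : 2 ≤ q) (ε : ℝ) (N M : ℕ) (i : Fin (M+1)) :
    batsP q ε N M i i =
      ∑ k ∈ Finset.Icc (i:ℕ) N,
        (N.choose k : ℝ) * (1 - ε) ^ k * ε ^ (N - k) * zeta q (i:ℕ) k := by
  have hzii := zeta_pos hq (le_refl (i:ℕ))
  rw [batsP]
  simp only [Matrix.of_apply, le_refl, if_true, Nat.sub_self, Nat.zero_mul, pow_zero, mul_one]
  refine Finset.sum_congr rfl fun k hk => ?_
  rw [mul_div_assoc]
  congr 1
  field_simp

lemma lam_formula {q : ℕ} (hq : 2 ≤ q) {ε : ℝ} (hε : 0 < ε) (hε1 : ε < 1) {N : ℕ} (hN : 1 ≤ N) :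
    ∑ k ∈ Finset.Icc 1 N,
        (N.choose k : ℝ) * (1 - ε) ^ k * ε ^ (N - k) * zeta q 1 k =
      1 - (ε + (1 - ε) / q) ^ N := by
  have hq0 : (0:ℝ) < q := by
    have : (0:ℕ) < q := by omega
    exact_mod_cast this
  have hIcc : Finset.Icc 1 N = Finset.range (N+1) \ {0} := by
    ext k; simp [Finset.mem_Icc, Finset.mem_range, Finset.mem_sdiff]; omega
  have hzero : ((N.choose 0 : ℝ) * (1 - ε) ^ 0 * ε ^ (N - 0) * zeta q 1 0) = 0 := by
    rw [zeta_zero_eq]; ring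
  have hfull : ∑ k ∈ Finset.Icc 1 N,
        (N.choose k : ℝ) * (1 - ε) ^ k * ε ^ (N - k) * zeta q 1 k =
      ∑ k ∈ Finset.range (N+1),
        (N.choose k : ℝ) * (1 - ε) ^ k * ε ^ (N - k) * zeta q 1 k := by
    rw [hIcc, Finset.sum_sdiff_eq_sub (by simp)]
    simp [zeta_zero_eq]
  rw [hfull]
  have hterm : ∀ k ∈ Finset.range (N+1),
      (N.choose k : ℝ) * (1 - ε) ^ k * ε ^ (N - k) * zeta q 1 k =
      (1 - ε) ^ k * ε ^ (N - k) * (N.choose k : ℝ)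
        - ((1 - ε)/q) ^ k * ε ^ (N - k) * (N.choose k : ℝ) := by
    intro k _
    rw [zeta_one]
    have : (q:ℝ) ^ (-(k:ℤ)) = ((q:ℝ)⁻¹) ^ k := by
      rw [zpow_neg, ← zpow_natCast, inv_zpow]
    rw [this]
    rw [div_pow]
    field_simp
    have hqk : (q:ℝ)^k * ((q:ℝ)⁻¹)^k = 1 := by rw [← mul_pow, mul_inv_cancel₀ hq0.ne', one_pow]
    linear_combination (-(N.choose k:ℝ) * (1-ε)^k) * hqk
  rw [Finset.sum_congr rfl hterm, Finset.sum_sub_distrib]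
  rw [← add_pow, ← add_pow]
  have h1 : (1 - ε) + ε = 1 := by ring
  have h2 : (1 - ε)/q + ε = ε + (1 - ε)/q := by ring
  rw [h1, h2, one_pow]

lemma batsP_diag_le {q : ℕ} (hq : 2 ≤ q) {ε : ℝ} (hε : 0 < ε) (hε1 : ε < 1) {N M : ℕ}
    (hN : 1 ≤ N) (i : Fin (M+1)) (hi2 : 2 ≤ (i:ℕ)) :
    batsP q ε N M i i ≤
      (1 - (ε + (1 - ε) / q) ^ N) - (N:ℝ) * (1-ε) * ε^(N-1) * (1 - (q:ℝ)⁻¹) := by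
  have h1ε : (0:ℝ) ≤ 1 - ε := by linarith
  have key : ∀ k, 1 ≤ k → (0:ℝ) ≤ zeta q 1 k := fun k hk => (zeta_pos hq hk).le
  rw [batsP_diag hq]
  have step1 : ∑ k ∈ Finset.Icc (i:ℕ) N,
        (N.choose k : ℝ) * (1 - ε) ^ k * ε ^ (N - k) * zeta q (i:ℕ) k
      ≤ ∑ k ∈ Finset.Icc (i:ℕ) N,
        (N.choose k : ℝ) * (1 - ε) ^ k * ε ^ (N - k) * zeta q 1 k := by
    refine Finset.sum_le_sum fun k hk => ?_
    have hik : (i:ℕ) ≤ k := (Finset.mem_Icc.mp hk).1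
    refine mul_le_mul_of_nonneg_left (zeta_le_zeta_one hq (by omega) hik) (by positivity)
  have step2 : ∑ k ∈ Finset.Icc (i:ℕ) N,
        (N.choose k : ℝ) * (1 - ε) ^ k * ε ^ (N - k) * zeta q 1 k
      ≤ ∑ k ∈ Finset.Icc 2 N,
        (N.choose k : ℝ) * (1 - ε) ^ k * ε ^ (N - k) * zeta q 1 k := by
    refine Finset.sum_le_sum_of_subset_of_nonneg ?_ fun k hk _ => ?_
    · refine Finset.Icc_subset_Icc_left hi2
    · have hk2 : 2 ≤ k := (Finset.mem_Icc.mp hk).1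
      have := key k (by omega)
      positivity
  have hins : Finset.Icc 1 N = insert 1 (Finset.Icc 2 N) := by
    ext k
    simp only [Finset.mem_Icc, Finset.mem_insert]
    omega
  have hsplit : ∑ k ∈ Finset.Icc 1 N,
        (N.choose k : ℝ) * (1 - ε) ^ k * ε ^ (N - k) * zeta q 1 k
      = (N.choose 1 : ℝ) * (1 - ε) ^ 1 * ε ^ (N - 1) * zeta q 1 1
        + ∑ k ∈ Finset.Icc 2 N,
        (N.choose k : ℝ) * (1 - ε) ^ k * ε ^ (N - k) * zeta q 1 k := by
    rw [hins, Finset.sum_insert (by simp)]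
  have hterm1 : (N.choose 1 : ℝ) * (1 - ε) ^ 1 * ε ^ (N - 1) * zeta q 1 1
      = (N:ℝ) * (1-ε) * ε^(N-1) * (1 - (q:ℝ)⁻¹) := by
    rw [Nat.choose_one_right, zeta_one]
    norm_num
  have := lam_formula (ε := ε) hq hε hε1 hN
  calc ∑ k ∈ Finset.Icc (i:ℕ) N,
        (N.choose k : ℝ) * (1 - ε) ^ k * ε ^ (N - k) * zeta q (i:ℕ) k
      ≤ ∑ k ∈ Finset.Icc 2 N,
        (N.choose k : ℝ) * (1 - ε) ^ k * ε ^ (N - k) * zeta q 1 k := le_trans step1 step2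
    _ = (1 - (ε + (1 - ε) / q) ^ N) - (N:ℝ) * (1-ε) * ε^(N-1) * (1 - (q:ℝ)⁻¹) := by
        rw [← this, hsplit, hterm1]; ring

lemma batsP_diag_one {q : ℕ} (hq : 2 ≤ q) {ε : ℝ} (hε : 0 < ε) (hε1 : ε < 1) {N M : ℕ}
    (hN : 1 ≤ N) (i : Fin (M+1)) (hi1 : (i:ℕ) = 1) :
    batsP q ε N M i i = 1 - (ε + (1 - ε) / q) ^ N := by
  rw [batsP_diag hq, hi1, lam_formula hq hε hε1 hN]

lemma batsP_last_one_pos {q : ℕ} (hq : 2 ≤ q) {ε : ℝ} (hε : 0 < ε) (hε1 : ε < 1) {N M : ℕ}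
    (hN : 1 ≤ N) (hM : 1 ≤ M) :
    0 < batsP q ε N M (Fin.last M) ⟨1, by omega⟩ := by
  have h1ε : (0:ℝ) < 1 - ε := by linarith
  rw [batsP]
  simp only [Matrix.of_apply, Fin.val_last]
  rw [if_pos (by simpa using hM)]
  refine Finset.sum_pos (fun k hk => ?_) ⟨N, by simp [Finset.mem_Icc]; omega⟩
  simp only [Finset.mem_Icc] at hk
  have hkN : k ≤ N := hk.2
  have hk1 : 1 ≤ k := hk.1
  have hc : (0:ℝ) < (N.choose k : ℝ) := by
    exact_mod_cast Nat.choose_pos hkN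
  have hz1 := zeta_pos hq (show (1:ℕ) ≤ M from hM)
  have hz2 := zeta_pos hq hk1
  have hz3 := zeta_pos hq (le_refl 1)
  have hz4 := qpow_pos hq ((M - 1) * (k - 1))
  positivity

lemma pow_entry_nonneg {n : ℕ} (A : Matrix (Fin n) (Fin n) ℝ)
    (hA : ∀ i j, 0 ≤ A i j) (L : ℕ) : ∀ i j, 0 ≤ (A ^ L) i j := by
  induction L with
  | zero =>
      intro i j
      simp only [pow_zero, Matrix.one_apply]
      split <;> norm_num
  | succ L ih =>
      intro i j
      rw [pow_succ, Matrix.mul_apply]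
      exact Finset.sum_nonneg fun s _ => mul_nonneg (ih i s) (hA s j)

lemma mulVec_pow_le {n : ℕ} (A : Matrix (Fin n) (Fin n) ℝ)
    (hA : ∀ i j, 0 ≤ A i j) (v : Fin n → ℝ) (lam : ℝ) (hlam : 0 ≤ lam)
    (hv : ∀ i, A.mulVec v i ≤ lam * v i) (L : ℕ) :
    ∀ i, (A ^ L).mulVec v i ≤ lam ^ L * v i := by
  induction L with
  | zero => intro i; rw [pow_zero, Matrix.one_mulVec]; simp
  | succ L ih =>
      intro i
      rw [pow_succ', ← Matrix.mulVec_mulVec]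
      have step : A.mulVec ((A ^ L).mulVec v) i ≤ A.mulVec (fun j => lam ^ L * v j) i := by
        simp only [Matrix.mulVec, dotProduct]
        exact Finset.sum_le_sum fun j _ => mul_le_mul_of_nonneg_left (ih j) (hA i j)
      refine le_trans step ?_
      have : A.mulVec (fun j => lam ^ L * v j) i = lam ^ L * A.mulVec v i := by
        simp only [Matrix.mulVec, dotProduct, Finset.mul_sum]
        exact Finset.sum_congr rfl fun j _ => by ring
      rw [this, pow_succ']
      calc lam ^ L * A.mulVec v i ≤ lam ^ L * (lam * v i) :=
            mul_le_mul_of_nonneg_left (hv i) (pow_nonneg hlam L)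
        _ = lam * lam ^ L * v i := by ring

lemma pow_entry_ge {n : ℕ} (A : Matrix (Fin n) (Fin n) ℝ)
    (hA : ∀ i j, 0 ≤ A i j) (a b : Fin n) (L : ℕ) :
    A a b * (A b b) ^ L ≤ (A ^ (L+1)) a b := by
  induction L with
  | zero => simp [pow_succ]
  | succ L ih =>
      rw [pow_succ A (L+1), Matrix.mul_apply]
      have hmem : b ∈ (Finset.univ : Finset (Fin n)) := Finset.mem_univ b
      have h1 : (A ^ (L+1)) a b * A b b ≤ ∑ s, (A ^ (L+1)) a s * A s b :=
        Finset.single_le_sum (fun s _ => mul_nonneg (pow_entry_nonneg A hA (L+1) a s) (hA s b)) hmem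
      calc A a b * A b b ^ (L+1) = (A a b * A b b ^ L) * A b b := by ring
        _ ≤ (A ^ (L+1)) a b * A b b := mul_le_mul_of_nonneg_right ih (hA b b)
        _ ≤ _ := h1

lemma batsE_eq (q : ℕ) (ε : ℝ) (N M L : ℕ) :
    batsE q ε N M L =
      ∑ j : Fin (M + 1), (j : ℝ) * ((batsP q ε N M) ^ L) (Fin.last M) j := by
  unfold batsE
  refine Finset.sum_congr rfl fun j _ => ?_
  congr 1
  simp only [Matrix.vecMul, dotProduct]
  rw [Finset.sum_eq_single_of_mem (Fin.last M) (Finset.mem_univ _)]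
  · simp [Fin.val_last]
  · intro i _ hne
    have : (i:ℕ) ≠ M := by
      intro h
      exact hne (Fin.ext (by simp [Fin.val_last, h]))
    simp [this]

lemma drift {q : ℕ} (hq : 2 ≤ q) {ε : ℝ} (hε : 0 < ε) (hε1 : ε < 1) {N M : ℕ}
    (hN : 1 ≤ N) (hM : 1 ≤ M) :
    ∃ B : ℝ, (M:ℝ) ≤ B ∧ 1 ≤ B ∧
      (∀ i : Fin (M+1),
        (batsP q ε N M).mulVec
            (fun j : Fin (M+1) => if (j:ℕ) = 0 then 0 else B ^ (j:ℕ)) i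
          ≤ (1 - (ε + (1 - ε) / q) ^ N) *
            (if (i:ℕ) = 0 then 0 else B ^ (i:ℕ))) := by
  have h1ε : (0:ℝ) < 1 - ε := by linarith
  have hq0 : (0:ℝ) < q := by
    have : (0:ℕ) < q := by omega
    exact_mod_cast this
  have hqinv : (q:ℝ)⁻¹ < 1 := by
    rw [inv_lt_one_iff₀]; right
    have : (1:ℕ) < q := by omega
    exact_mod_cast this
  set lam : ℝ := 1 - (ε + (1 - ε) / q) ^ N with hlam_def
  set δ : ℝ := (N:ℝ) * (1-ε) * ε^(N-1) * (1 - (q:ℝ)⁻¹) with hδ_def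
  have hδ : 0 < δ := by
    have hN' : (0:ℝ) < (N:ℝ) := by exact_mod_cast hN
    have := hqinv
    have hεp : (0:ℝ) < ε ^ (N-1) := pow_pos hε _
    have : (0:ℝ) < 1 - (q:ℝ)⁻¹ := by linarith
    positivity
  set A : ℝ := ∑ j : Fin (M+1), (zeta q (j:ℕ) (j:ℕ))⁻¹ with hA_def
  have hA_ge : ∀ j : Fin (M+1), (zeta q (j:ℕ) (j:ℕ))⁻¹ ≤ A := by
    intro j
    exact Finset.single_le_sum (f := fun s : Fin (M+1) => (zeta q (s:ℕ) (s:ℕ))⁻¹)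
      (fun s _ => inv_nonneg.mpr (zeta_pos hq (le_refl _)).le) (Finset.mem_univ j)
  have hA_pos : 0 < A := by
    refine Finset.sum_pos (fun s _ => inv_pos.mpr (zeta_pos hq (le_refl _))) ⟨0, Finset.mem_univ _⟩
  set B : ℝ := max (max 1 (M:ℝ)) (A*(M:ℝ)/δ) with hB_def
  have hB1 : (1:ℝ) ≤ B := le_trans (le_max_left 1 (M:ℝ)) (le_max_left _ _)
  have hBM : (M:ℝ) ≤ B := le_trans (le_max_right 1 (M:ℝ)) (le_max_left _ _)
  have hB0 : (0:ℝ) < B := lt_of_lt_of_le one_pos hB1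
  have hBδ : A * (M:ℝ) ≤ δ * B := by
    have h := le_trans (le_max_right (max 1 (M:ℝ)) (A*(M:ℝ)/δ)) (le_refl B)
    rw [div_le_iff₀ hδ] at h
    linarith
  refine ⟨B, hBM, hB1, fun i => ?_⟩
  set v : Fin (M+1) → ℝ := fun j => if (j:ℕ) = 0 then 0 else B ^ (j:ℕ) with hv_def
  have hvnonneg : ∀ j, 0 ≤ v j := by
    intro j; simp only [hv_def]
    split
    · exact le_refl 0
    · positivity
  show (batsP q ε N M).mulVec v i ≤ lam * v i
  rw [Matrix.mulVec, dotProduct]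
  by_cases h0 : (i:ℕ) = 0
  · have : ∀ j ∈ (Finset.univ : Finset (Fin (M+1))), batsP q ε N M i j * v j = 0 := by
      intro j _
      by_cases hj : (j:ℕ) = 0
      · simp [hv_def, hj, -Fin.val_eq_zero_iff]
      · have hnle : ¬ ((j:ℕ) ≤ (i:ℕ)) := by omega
        rw [batsP]
        simp only [Matrix.of_apply]
        rw [if_neg hnle, zero_mul]
    rw [Finset.sum_eq_zero this]
    simp [hv_def, h0, -Fin.val_eq_zero_iff]
  by_cases h1 : (i:ℕ) = 1
  · have hsum : ∑ j, batsP q ε N M i j * v j = batsP q ε N M i i * v i := by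
      refine Finset.sum_eq_single_of_mem i (Finset.mem_univ i) fun j _ hne => ?_
      by_cases hj : (j:ℕ) = 0
      · simp [hv_def, hj, -Fin.val_eq_zero_iff]
      · have hj1 : (j:ℕ) ≠ 1 := fun h => hne (Fin.ext (by rw [h, h1]))
        have hnle : ¬ ((j:ℕ) ≤ (i:ℕ)) := by omega
        rw [batsP]
        simp only [Matrix.of_apply]
        rw [if_neg hnle, zero_mul]
    rw [hsum, batsP_diag_one hq hε hε1 hN i h1]
  -- case 2 ≤ i
  have h2 : 2 ≤ (i:ℕ) := by omega
  have hvi : v i = B ^ (i:ℕ) := by simp [hv_def, h0, -Fin.val_eq_zero_iff]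
  have hsplit : ∑ j, batsP q ε N M i j * v j
      = (∑ j ∈ Finset.univ.erase i, batsP q ε N M i j * v j) + batsP q ε N M i i * v i :=
    (Finset.sum_erase_add _ _ (Finset.mem_univ i)).symm
  have hbound : ∀ j ∈ Finset.univ.erase i,
      batsP q ε N M i j * v j ≤ A * B ^ ((i:ℕ) - 1) := by
    intro j hj
    have hne : j ≠ i := (Finset.mem_erase.mp hj).1
    have hAB : (0:ℝ) ≤ A * B ^ ((i:ℕ) - 1) := by positivity
    by_cases hj0 : (j:ℕ) = 0
    · simp [hv_def, hj0, hAB, -Fin.val_eq_zero_iff]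
    by_cases hle : (j:ℕ) ≤ (i:ℕ)
    · have hji : (j:ℕ) < (i:ℕ) := lt_of_le_of_ne hle fun h => hne (Fin.ext h)
      have hvj : v j = B ^ (j:ℕ) := by simp [hv_def, hj0, -Fin.val_eq_zero_iff]
      rw [hvj]
      have h1' : batsP q ε N M i j ≤ A := le_trans (batsP_le hq hε hε1 N M i j) (hA_ge j)
      have h2' : B ^ (j:ℕ) ≤ B ^ ((i:ℕ) - 1) := pow_le_pow_right₀ hB1 (by omega)
      exact mul_le_mul h1' h2' (by positivity) hA_pos.le
    · rw [batsP]
      simp only [Matrix.of_apply]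
      rw [if_neg hle, zero_mul]
      exact hAB
  have hcard : (Finset.univ.erase i).card = M := by
    rw [Finset.card_erase_of_mem (Finset.mem_univ i)]
    simp
  have hsum_erase : ∑ j ∈ Finset.univ.erase i, batsP q ε N M i j * v j
      ≤ (M:ℝ) * (A * B ^ ((i:ℕ) - 1)) := by
    calc ∑ j ∈ Finset.univ.erase i, batsP q ε N M i j * v j
        ≤ (Finset.univ.erase i).card • (A * B ^ ((i:ℕ) - 1)) :=
          Finset.sum_le_card_nsmul _ _ _ hbound
      _ = (M:ℝ) * (A * B ^ ((i:ℕ) - 1)) := by rw [hcard, nsmul_eq_mul]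
  have hdiag := batsP_diag_le hq hε hε1 hN i h2
  have hkey : (M:ℝ) * (A * B ^ ((i:ℕ) - 1)) ≤ δ * B ^ (i:ℕ) := by
    have hBi : B ^ (i:ℕ) = B ^ ((i:ℕ) - 1) * B := by
      rw [← pow_succ]
      congr 1
      omega
    rw [hBi]
    have hBp : (0:ℝ) ≤ B ^ ((i:ℕ) - 1) := by positivity
    calc (M:ℝ) * (A * B ^ ((i:ℕ) - 1)) = (A * (M:ℝ)) * B ^ ((i:ℕ) - 1) := by ring
      _ ≤ (δ * B) * B ^ ((i:ℕ) - 1) := mul_le_mul_of_nonneg_right hBδ hBp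
      _ = δ * (B ^ ((i:ℕ) - 1) * B) := by ring
  rw [hsplit, hvi]
  have hvip : (0:ℝ) ≤ B ^ (i:ℕ) := by positivity
  have : batsP q ε N M i i * B ^ (i:ℕ) ≤ (lam - δ) * B ^ (i:ℕ) :=
    mul_le_mul_of_nonneg_right hdiag hvip
  calc (∑ j ∈ Finset.univ.erase i, batsP q ε N M i j * v j) + batsP q ε N M i i * B ^ (i:ℕ)
      ≤ (M:ℝ) * (A * B ^ ((i:ℕ) - 1)) + (lam - δ) * B ^ (i:ℕ) := add_le_add hsum_erase this
    _ ≤ δ * B ^ (i:ℕ) + (lam - δ) * B ^ (i:ℕ) := by linarith [hkey]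
    _ = lam * B ^ (i:ℕ) := by ring

theorem stmt6 (q : ℕ) (hq : ∃ p k : ℕ, Nat.Prime p ∧ 0 < k ∧ q = p ^ k)
    (ε : ℝ) (hε : 0 < ε) (hε1 : ε < 1) (M N : ℕ) (hM : 1 ≤ M) (hN : 1 ≤ N) :
    ∃ c₁ c₂ : ℝ, 0 < c₁ ∧ 0 < c₂ ∧ ∃ L₀ : ℕ, ∀ L : ℕ, L₀ ≤ L →
      c₁ * (1 - (ε + (1 - ε) / q) ^ N) ^ L ≤ batsE q ε N M L ∧
      batsE q ε N M L ≤ c₂ * (1 - (ε + (1 - ε) / q) ^ N) ^ L := by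
  obtain ⟨p, k, hp, hk, hqe⟩ := hq
  have hq2 : 2 ≤ q := by
    rw [hqe]
    calc 2 ≤ p := hp.two_le
      _ ≤ p ^ k := Nat.le_self_pow (by omega) p
  clear hqe
  have h1ε : (0:ℝ) < 1 - ε := by linarith
  have hq0 : (0:ℝ) < q := by
    have : (0:ℕ) < q := by omega
    exact_mod_cast this
  have hq2' : (2:ℝ) ≤ q := by exact_mod_cast hq2
  set lam : ℝ := 1 - (ε + (1 - ε) / q) ^ N with hlam_def
  have hbase_pos : 0 < ε + (1 - ε) / q := by positivity
  have hbase_lt : ε + (1 - ε) / q < 1 := by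
    have : (1 - ε) / q ≤ (1 - ε) / 2 :=
      div_le_div_of_nonneg_left h1ε.le two_pos hq2'
    linarith
  have hlam_pos : 0 < lam := by
    have := pow_lt_one₀ hbase_pos.le hbase_lt (by omega : N ≠ 0)
    simp only [hlam_def]
    linarith
  set P := batsP q ε N M with hP_def
  have hPnn : ∀ i j, 0 ≤ P i j := batsP_nonneg hq2 hε hε1 N M
  have hPLnn := pow_entry_nonneg P hPnn
  -- the special index of value 1
  set one : Fin (M+1) := ⟨1, by omega⟩ with hone_def
  have hone_val : (one : ℕ) = 1 := rfl
  set pML : ℝ := P (Fin.last M) one with hpML_def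
  have hpML : 0 < pML := batsP_last_one_pos hq2 hε hε1 hN hM
  obtain ⟨B, hBM, hB1, hdrift⟩ := drift hq2 hε hε1 hN hM
  have hB0 : (0:ℝ) < B := lt_of_lt_of_le one_pos hB1
  set v : Fin (M+1) → ℝ := fun j => if (j:ℕ) = 0 then 0 else B ^ (j:ℕ) with hv_def
  have hv : ∀ i, P.mulVec v i ≤ lam * v i := fun i => hdrift i
  refine ⟨pML / lam, B ^ M, div_pos hpML hlam_pos, by positivity, 1, fun L hL => ?_⟩
  obtain ⟨L', rfl⟩ : ∃ L', L = L' + 1 := ⟨L - 1, by omega⟩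
  constructor
  · -- lower bound
    rw [batsE_eq]
    have hterm : pML / lam * lam ^ (L' + 1) = pML * lam ^ L' := by
      field_simp
      ring
    rw [hterm]
    have h1 : pML * lam ^ L' ≤ (P ^ (L' + 1)) (Fin.last M) one := by
      have := pow_entry_ge P hPnn (Fin.last M) one L'
      have hPoo : P one one = lam := batsP_diag_one hq2 hε hε1 hN one hone_val
      rw [hPoo] at this
      exact this
    refine le_trans h1 ?_
    have : ((one:ℕ) : ℝ) * (P ^ (L'+1)) (Fin.last M) one = (P ^ (L'+1)) (Fin.last M) one := by
      rw [hone_val]; norm_num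
    rw [← this]
    exact Finset.single_le_sum
      (f := fun j : Fin (M+1) => ((j:ℕ):ℝ) * (P ^ (L'+1)) (Fin.last M) j)
      (fun j _ => mul_nonneg (by positivity) (hPLnn (L'+1) _ _)) (Finset.mem_univ one)
  · -- upper bound
    rw [batsE_eq]
    have hstep : ∀ j : Fin (M+1), ((j:ℕ):ℝ) * (P ^ (L'+1)) (Fin.last M) j
        ≤ (P ^ (L'+1)) (Fin.last M) j * v j := by
      intro j
      have hjv : ((j:ℕ):ℝ) ≤ v j := by
        by_cases hj0 : (j:ℕ) = 0
        · simp [hv_def, hj0]; split <;> norm_num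
        · have h1 : ((j:ℕ):ℝ) ≤ (M:ℝ) := by
            have := Fin.is_le j
            exact_mod_cast this
          have h2 : B ≤ B ^ (j:ℕ) := le_self_pow₀ hB1 hj0
          simp only [hv_def, if_neg hj0]
          linarith
      calc ((j:ℕ):ℝ) * (P ^ (L'+1)) (Fin.last M) j
          ≤ v j * (P ^ (L'+1)) (Fin.last M) j :=
            mul_le_mul_of_nonneg_right hjv (hPLnn (L'+1) _ _)
        _ = (P ^ (L'+1)) (Fin.last M) j * v j := by ring
    calc ∑ j : Fin (M+1), ((j:ℕ):ℝ) * (P ^ (L'+1)) (Fin.last M) j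
        ≤ ∑ j : Fin (M+1), (P ^ (L'+1)) (Fin.last M) j * v j :=
          Finset.sum_le_sum fun j _ => hstep j
      _ = (P ^ (L'+1)).mulVec v (Fin.last M) := by
          rw [Matrix.mulVec, dotProduct]
      _ ≤ lam ^ (L'+1) * v (Fin.last M) :=
          mulVec_pow_le P hPnn v lam hlam_pos.le hv (L'+1) (Fin.last M)
      _ ≤ B ^ M * lam ^ (L'+1) := by
          have hvl : v (Fin.last M) = B ^ M := by
            simp only [hv_def, Fin.val_last]
            rw [if_neg (by omega)]
          rw [hvl]; ring_nf; exact le_refl _
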